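/- Let p be a prime and k a commutative ring of characteristic p. Then the operator F = ∑_i x_i²·∂_i on k[x_0, …, x_{n-1}] satisfies F^p = 0, i.e. its p-fold composition with itself is the zero operator. (This nilpotence gives the p-DG structure on link homology coming from the action of f in characteristic p.) -/

import Mathlib

open MvPolynomial

/-- The sl₂-operator `F = ∑ᵢ xᵢ²·∂ᵢ` on `k[x₀, …, x_{n-1}]`. -/
noncomputable def opF (k : Type*) [CommRing k] (n : ℕ) :
    Module.End k (MvPolynomial (Fin n) k) :=
  ∑ i : Fin n, (LinearMap.mulLeft k (X i ^ 2)) ∘ₗ (pderiv i).toLinearMap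

section aux

variable {k : Type*} [CommRing k] {n : ℕ}

noncomputable def opFi (k : Type*) [CommRing k] {n : ℕ} (i : Fin n) :
    Module.End k (MvPolynomial (Fin n) k) :=
  (LinearMap.mulLeft k (X i ^ 2)) ∘ₗ (pderiv i).toLinearMap

lemma opFi_monomial (i : Fin n) (m : Fin n →₀ ℕ) (c : k) :
    opFi k i (monomial m c) = (m i : k) • monomial (m + Finsupp.single i 1) c := by
  simp only [opFi, LinearMap.comp_apply, Derivation.coeFn_coe, pderiv_monomial,
    LinearMap.mulLeft_apply, X_pow_eq_monomial, monomial_mul, one_mul]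
  rcases Nat.eq_zero_or_pos (m i) with h | h
  · simp [h]
  · have hm : Finsupp.single i 2 + (m - Finsupp.single i 1) = m + Finsupp.single i 1 := by
      ext j
      rcases eq_or_ne j i with rfl | hj
      · simp only [Finsupp.add_apply, Finsupp.single_eq_same, Finsupp.tsub_apply]
        omega
      · simp [Finsupp.single_apply, hj.symm, Ne.symm hj]
    rw [hm, smul_monomial, smul_eq_mul, mul_comm]

lemma opFi_pow_monomial (i : Fin n) (t : ℕ) (m : Fin n →₀ ℕ) (c : k) :
    (opFi k i ^ t) (monomial m c) =
      (((∏ j ∈ Finset.range t, (m i + j) : ℕ)) : k) • monomial (m + Finsupp.single i t) c := by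
  induction t generalizing m with
  | zero => simp
  | succ t ih =>
      rw [pow_succ', Module.End.mul_apply, ih, map_smul, opFi_monomial, smul_smul]
      have h1 : ((m + Finsupp.single i t) i) = m i + t := by simp
      have h2 : m + Finsupp.single i t + Finsupp.single i 1
          = m + Finsupp.single i (t + 1) := by
        rw [Finsupp.single_add, ← add_assoc]
      rw [h1, h2, Finset.prod_range_succ]
      congr 1
      push_cast
      ring

lemma opFi_pow_p (p : ℕ) (hp : p.Prime) [CharP k p] (i : Fin n) :
    opFi k i ^ p = 0 := by
  ext m : 1
  apply LinearMap.ext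
  intro c
  show (opFi k i ^ p) (monomial m c) = 0
  simp only [LinearMap.comp_apply, LinearMap.zero_apply, opFi_pow_monomial]
  have hdvd : p ∣ ∏ j ∈ Finset.range p, (m i + j) := by
    have hpos : 0 < p := hp.pos
    set j0 := (p - m i % p) % p with hj0
    have hmem : j0 ∈ Finset.range p := Finset.mem_range.mpr (Nat.mod_lt _ hpos)
    refine dvd_trans ?_ (Finset.dvd_prod_of_mem _ hmem)
    rcases Nat.eq_zero_or_pos (m i % p) with h | h
    · have : j0 = 0 := by simp [hj0, h]
      rw [this, Nat.add_zero]
      exact Nat.dvd_of_mod_eq_zero h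
    · have h1 : m i % p < p := Nat.mod_lt _ hpos
      have h2 : j0 = p - m i % p := Nat.mod_eq_of_lt (by omega)
      have h3 : m i % p ≤ m i := Nat.mod_le _ _
      have h4 : m i + j0 = (m i - m i % p) + p := by omega
      rw [h4]
      exact Nat.dvd_add (Nat.dvd_sub_mod _) dvd_rfl
  rw [(CharP.cast_eq_zero_iff k p _).mpr hdvd, zero_smul]

lemma opFi_commute (i j : Fin n) : Commute (opFi k i) (opFi k j) := by
  rcases eq_or_ne i j with rfl | hij
  · exact Commute.refl _
  · show _ * _ = _ * _
    ext m : 1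
    apply LinearMap.ext
    intro c
    show (opFi k i * opFi k j) (monomial m c) = (opFi k j * opFi k i) (monomial m c)
    simp only [Module.End.mul_apply, LinearMap.comp_apply, opFi_monomial, map_smul,
      Finsupp.add_apply, Finsupp.single_apply, if_neg hij, if_neg (Ne.symm hij : j ≠ i),
      add_zero]
    rw [smul_smul, smul_smul, mul_comm ((m j : k)) ((m i : k))]
    congr 2
    abel

lemma opFi_commute_sum (a : Fin n) (s' : Finset (Fin n)) :
    Commute (opFi k a) (∑ i ∈ s', opFi k i) :=
  Commute.sum_right _ _ _ (fun i _ => opFi_commute a i)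

end aux

set_option maxHeartbeats 1600000 in
/-- In characteristic `p`, the operator `F` is `p`-nilpotent: `F^p = 0`. -/
theorem opF_pow_p_eq_zero (k : Type*) [CommRing k] (p : ℕ) (hp : p.Prime) [CharP k p]
    (n : ℕ) :
    opF k n ^ p = 0 := by
  have hpcast : ((p : ℕ) : Module.End k (MvPolynomial (Fin n) k)) = 0 := by
    rw [← map_natCast (algebraMap k (Module.End k (MvPolynomial (Fin n) k))) p,
      CharP.cast_eq_zero k, map_zero]
  have hF : opF k n = ∑ i : Fin n, opFi k i := rfl
  rw [hF]
  classical
  have key : ∀ (s : Finset (Fin n)), (∑ i ∈ s, opFi k i) ^ p = ∑ i ∈ s, (opFi k i) ^ p := by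
    intro s
    induction s using Finset.induction with
    | empty => simp [zero_pow hp.ne_zero]
    | @insert a s' h ih =>
        rw [Finset.sum_insert h, Finset.sum_insert h, ← ih]
        obtain ⟨r, hr⟩ := (opFi_commute_sum (k := k) a s').exists_add_pow_prime_eq hp
        rw [hr, hpcast, zero_mul, zero_mul, zero_mul, add_zero]
  rw [key Finset.univ]
  simp [opFi_pow_p p hp]
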